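/- (Theorem 1 for ISTC, parts (i)–(ii)) Under the setting of the ISTC continuation algorithm — Ψ ∈ ℝ^{n×p} with unit-norm columns and mutual coherence μ satisfying μ·s < 1/2; x† ∈ ℝ^p with support A†, |A†| = s ≥ 1; y = Ψ x† + η with ‖η‖₂ ≤ ε > 0; C₁ > 1/(1 − 2μs); α = (1 − 1/C₁)/(μs); γ ∈ [2μs/(1 − 1/C₁), 1); K ≥ 1; λ_ℓ = γ^ℓ λ₀ with ‖x†‖_{ℓ∞} ≤ α γ λ₀; x(λ₀) = 0 and x(λ_ℓ) obtained by K iterations of z ↦ S_{λ_ℓ}(z + Ψᵗ(y − Ψ z)) from x(λ_{ℓ−1}) — let λ* = C₁ ε and let ℓ* be the first index with λ_{ℓ*} < λ*, and set x* = x(λ_{ℓ*−1}). Then (i) supp(x*) ⊂ A†, and (ii) ‖x* − x†‖_{ℓ∞} ≤ (C₁ − 1)ε/(μs). -/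

import Mathlib

open Finset Matrix

/-- The soft-thresholding operator `S_λ(t) = sgn(t) · max(|t| − λ, 0)`. -/
noncomputable def softThresh (lam t : ℝ) : ℝ := Real.sign t * max (|t| - lam) 0

lemma softThresh_eq_zero {lam t : ℝ} (h : |t| ≤ lam) : softThresh lam t = 0 := by
  unfold softThresh
  rw [max_eq_right (by linarith), mul_zero]

lemma abs_softThresh_sub_le {lam t : ℝ} (hlam : 0 ≤ lam) :
    |softThresh lam t - t| ≤ lam := by
  unfold softThresh
  rcases le_or_gt (|t|) lam with h | h
  · rw [max_eq_right (by linarith), mul_zero, zero_sub, abs_neg]; exact h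
  · rw [max_eq_left (by linarith)]
    rcases lt_trichotomy t 0 with ht | ht | ht
    · rw [Real.sign_of_neg ht, abs_of_neg ht]
      have he : (-1 : ℝ) * (-t - lam) - t = lam := by ring
      rw [he, abs_of_nonneg hlam]
    · subst ht; simp at h; linarith
    · rw [Real.sign_of_pos ht, abs_of_pos ht]
      have he : (1 : ℝ) * (t - lam) - t = -lam := by ring
      rw [he, abs_neg, abs_of_nonneg hlam]

lemma istc_step {n p : ℕ} (Ψ : Matrix (Fin n) (Fin p) ℝ) (μ ε : ℝ) (s : ℕ)
    (xdag : Fin p → ℝ) (η y : Fin n → ℝ) (Adag : Finset (Fin p))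
    (hcol : ∀ i, ∑ k, Ψ k i ^ 2 = 1)
    (hcoh : ∀ i j, i ≠ j → |∑ k, Ψ k i * Ψ k j| ≤ μ) (hμ : 0 ≤ μ)
    (hsuppdag : Function.support xdag = (Adag : Set (Fin p)))
    (hcard : Adag.card = s)
    (hy : y = Ψ.mulVec xdag + η)
    (hη : Real.sqrt (∑ k, η k ^ 2) ≤ ε) (hε : 0 ≤ ε)
    (lam : ℝ) (hlam : 0 ≤ lam)
    (z : Fin p → ℝ) (hz : Function.support z ⊆ (Adag : Set (Fin p)))
    (hcond : μ * s * ‖z - xdag‖ + ε ≤ lam) :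
    Function.support (fun i => softThresh lam (z i + Ψ.transpose.mulVec (y - Ψ.mulVec z) i))
      ⊆ (Adag : Set (Fin p)) ∧
    ‖(fun i => softThresh lam (z i + Ψ.transpose.mulVec (y - Ψ.mulVec z) i)) - xdag‖
      ≤ lam + (μ * s * ‖z - xdag‖ + ε) := by
  set w : Fin p → ℝ := xdag - z with hw
  have hwj : ∀ j, j ∉ Adag → w j = 0 := by
    intro j hj
    have h1 : xdag j = 0 := by
      by_contra h
      exact hj (by rw [← Finset.mem_coe, ← hsuppdag]; exact h)
    have h2 : z j = 0 := by
      by_contra h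
      exact hj (Finset.mem_coe.mp (hz h))
    simp [hw, h1, h2]
  have hwle : ∀ j, |w j| ≤ ‖z - xdag‖ := by
    intro j
    have h := norm_le_pi_norm (z - xdag) j
    rw [Real.norm_eq_abs, Pi.sub_apply] at h
    calc |w j| = |z j - xdag j| := by rw [hw]; rw [Pi.sub_apply, abs_sub_comm]
    _ ≤ ‖z - xdag‖ := h
  -- key bound on the argument
  have hargbound : ∀ i, |(z i + Ψ.transpose.mulVec (y - Ψ.mulVec z) i) - xdag i|
      ≤ μ * s * ‖z - xdag‖ + ε := by
    intro i
    have hid : (z i + Ψ.transpose.mulVec (y - Ψ.mulVec z) i) - xdag i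
        = (∑ j ∈ Finset.univ.erase i, (∑ k, Ψ k i * Ψ k j) * w j) + ∑ k, Ψ k i * η k := by
      subst hy
      simp only [Matrix.mulVec, Matrix.transpose_apply, dotProduct, Pi.sub_apply, Pi.add_apply]
      have hin : ∀ k, (∑ j, Ψ k j * xdag j + η k) - ∑ j, Ψ k j * z j
          = (∑ j, Ψ k j * w j) + η k := by
        intro k
        simp only [hw, Pi.sub_apply, mul_sub, Finset.sum_sub_distrib]
        ring
      simp only [hin, mul_add, Finset.sum_add_distrib]
      have swap : ∑ k, Ψ k i * ∑ j, Ψ k j * w j = ∑ j, (∑ k, Ψ k i * Ψ k j) * w j := by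
        simp_rw [Finset.mul_sum, Finset.sum_mul]
        rw [Finset.sum_comm]
        apply Finset.sum_congr rfl; intro j _
        apply Finset.sum_congr rfl; intro k _
        ring
      rw [swap]
      have hsplit : ∑ j, (∑ k, Ψ k i * Ψ k j) * w j
          = (∑ k, Ψ k i * Ψ k i) * w i + ∑ j ∈ Finset.univ.erase i, (∑ k, Ψ k i * Ψ k j) * w j :=
        (Finset.add_sum_erase _ _ (Finset.mem_univ i)).symm
      have hGii : (∑ k, Ψ k i * Ψ k i) = 1 := by
        rw [← hcol i]; apply Finset.sum_congr rfl; intro k _; ring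
      rw [hsplit, hGii, one_mul]
      have : w i = xdag i - z i := by rw [hw]; rfl
      rw [this]; ring
    rw [hid]
    have h1 : |∑ j ∈ Finset.univ.erase i, (∑ k, Ψ k i * Ψ k j) * w j| ≤ μ * s * ‖z - xdag‖ := by
      have habs := Finset.abs_sum_le_sum_abs
        (fun j => (∑ k, Ψ k i * Ψ k j) * w j) (Finset.univ.erase i)
      have hsub : ∑ j ∈ Finset.univ.erase i, |(∑ k, Ψ k i * Ψ k j) * w j|
          = ∑ j ∈ (Finset.univ.erase i) ∩ Adag, |(∑ k, Ψ k i * Ψ k j) * w j| := by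
        refine (Finset.sum_subset (Finset.inter_subset_left) ?_).symm
        intro j hj hjn
        have : j ∉ Adag := fun h => hjn (Finset.mem_inter.mpr ⟨hj, h⟩)
        rw [hwj j this, mul_zero, abs_zero]
      have hterm : ∀ j ∈ (Finset.univ.erase i) ∩ Adag,
          |(∑ k, Ψ k i * Ψ k j) * w j| ≤ μ * ‖z - xdag‖ := by
        intro j hj
        have hji : j ≠ i := (Finset.mem_erase.mp (Finset.mem_inter.mp hj).1).1
        rw [abs_mul]
        exact mul_le_mul (hcoh i j hji.symm) (hwle j) (abs_nonneg _) hμ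
      have hcards : (((Finset.univ.erase i) ∩ Adag).card : ℝ) ≤ (s : ℝ) := by
        have := Finset.card_le_card (Finset.inter_subset_right (s₁ := Finset.univ.erase i) (s₂ := Adag))
        rw [hcard] at this
        exact_mod_cast this
      calc |∑ j ∈ Finset.univ.erase i, (∑ k, Ψ k i * Ψ k j) * w j|
          ≤ ∑ j ∈ Finset.univ.erase i, |(∑ k, Ψ k i * Ψ k j) * w j| := habs
        _ = ∑ j ∈ (Finset.univ.erase i) ∩ Adag, |(∑ k, Ψ k i * Ψ k j) * w j| := hsub
        _ ≤ ∑ _j ∈ (Finset.univ.erase i) ∩ Adag, μ * ‖z - xdag‖ := Finset.sum_le_sum hterm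
        _ = (((Finset.univ.erase i) ∩ Adag).card : ℝ) * (μ * ‖z - xdag‖) := by
            rw [Finset.sum_const, nsmul_eq_mul]
        _ ≤ (s : ℝ) * (μ * ‖z - xdag‖) := by
            apply mul_le_mul_of_nonneg_right hcards
            exact mul_nonneg hμ (norm_nonneg _)
        _ = μ * s * ‖z - xdag‖ := by ring
    have h2 : |∑ k, Ψ k i * η k| ≤ ε := by
      have hsq := Finset.sum_mul_sq_le_sq_mul_sq Finset.univ (fun k => Ψ k i) η
      have : |∑ k, Ψ k i * η k| ≤ Real.sqrt ((∑ k, Ψ k i ^ 2) * ∑ k, η k ^ 2) := by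
        rw [← Real.sqrt_sq_eq_abs]
        exact Real.sqrt_le_sqrt hsq
      rw [hcol i, one_mul] at this
      exact this.trans hη
    calc |(∑ j ∈ Finset.univ.erase i, (∑ k, Ψ k i * Ψ k j) * w j) + ∑ k, Ψ k i * η k|
        ≤ |∑ j ∈ Finset.univ.erase i, (∑ k, Ψ k i * Ψ k j) * w j| + |∑ k, Ψ k i * η k| :=
          abs_add_le _ _
      _ ≤ μ * s * ‖z - xdag‖ + ε := add_le_add h1 h2
  constructor
  · intro i hi
    by_contra hmem
    have hx0 : xdag i = 0 := by
      by_contra h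
      exact hmem (by rw [← hsuppdag]; exact h)
    have harg : |z i + Ψ.transpose.mulVec (y - Ψ.mulVec z) i| ≤ lam := by
      have := hargbound i
      rw [hx0, sub_zero] at this
      linarith
    exact hi (softThresh_eq_zero harg)
  · rw [pi_norm_le_iff_of_nonneg (by positivity)]
    intro i
    rw [Pi.sub_apply, Real.norm_eq_abs]
    have h1 := abs_softThresh_sub_le (t := z i + Ψ.transpose.mulVec (y - Ψ.mulVec z) i) hlam
    have h2 := hargbound i
    calc |softThresh lam (z i + Ψ.transpose.mulVec (y - Ψ.mulVec z) i) - xdag i|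
        = |(softThresh lam (z i + Ψ.transpose.mulVec (y - Ψ.mulVec z) i)
            - (z i + Ψ.transpose.mulVec (y - Ψ.mulVec z) i))
            + ((z i + Ψ.transpose.mulVec (y - Ψ.mulVec z) i) - xdag i)| := by ring_nf
      _ ≤ _ := (abs_add_le _ _).trans (add_le_add h1 h2)

/-- Theorem 1 for ISTC, parts (i)–(ii): along the continuation path `λ_ℓ = γ^ℓ λ₀`,
with `x(λ₀) = 0` and `x(λ_ℓ)` obtained by `K` soft-thresholding iterations at level
`λ_ℓ` warm-started from `x(λ_{ℓ−1})`, stopping at the first index `ℓ*` with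
`λ_{ℓ*} < λ* = C₁ε` and returning `x* = x(λ_{ℓ*−1})`, one has
(i) `supp(x*) ⊂ A†` and (ii) `‖x* − x†‖_{ℓ∞} ≤ (C₁ − 1)ε/(μs)`. -/
theorem istc_convergence {n p : ℕ} (Ψ : Matrix (Fin n) (Fin p) ℝ)
    (μ ε C₁ α γ lam₀ : ℝ) (s K : ℕ)
    (xdag : Fin p → ℝ) (η y : Fin n → ℝ) (Adag : Finset (Fin p))
    (hcol : ∀ i, ∑ k, Ψ k i ^ 2 = 1)
    (hcoh : ∀ i j, i ≠ j → |∑ k, Ψ k i * Ψ k j| ≤ μ) (hμpos : 0 < μ)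
    (hsuppdag : Function.support xdag = (Adag : Set (Fin p)))
    (hcard : Adag.card = s) (hs : 1 ≤ s) (hμs : μ * s < 1 / 2)
    (hy : y = Ψ.mulVec xdag + η)
    (hη : Real.sqrt (∑ k, η k ^ 2) ≤ ε) (hε : 0 < ε)
    (hC : 1 / (1 - 2 * μ * s) < C₁)
    (hα : α = (1 - 1 / C₁) / (μ * s))
    (hγ : γ ∈ Set.Ico (2 * μ * s / (1 - 1 / C₁)) 1)
    (hK : 1 ≤ K)
    (xseq : ℕ → Fin p → ℝ)
    (hx0 : xseq 0 = 0)
    (hxstep : ∀ ℓ : ℕ, xseq (ℓ + 1) =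
      (fun z : Fin p → ℝ => fun i =>
          softThresh (γ ^ (ℓ + 1) * lam₀)
            (z i + Ψ.transpose.mulVec (y - Ψ.mulVec z) i))^[K] (xseq ℓ))
    (hlam₀ : ‖xdag‖ ≤ α * γ * lam₀)
    (lstar : ℕ) (hlstar_pos : 1 ≤ lstar)
    (hlstar : γ ^ lstar * lam₀ < C₁ * ε)
    (hlstar_first : ∀ m < lstar, C₁ * ε ≤ γ ^ m * lam₀) :
    Function.support (xseq (lstar - 1)) ⊆ (Adag : Set (Fin p)) ∧
    ‖xseq (lstar - 1) - xdag‖ ≤ (C₁ - 1) * ε / (μ * s) := by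
  have hspos : (0:ℝ) < (s:ℝ) := by exact_mod_cast hs
  have hμspos : (0:ℝ) < μ * s := mul_pos hμpos hspos
  have hC0 : (0:ℝ) < 1 - 2 * μ * s := by linarith
  have hC1pos : 0 < C₁ := lt_trans (by positivity) hC
  have hC1gt1 : 1 < C₁ := by
    have h1 : (1:ℝ) ≤ 1 / (1 - 2 * μ * s) := by
      rw [le_div_iff₀ hC0]; linarith
    linarith
  have hβ2μs : 2 * μ * s < 1 - 1 / C₁ := by
    have h1 : 1 < C₁ * (1 - 2 * μ * s) := (div_lt_iff₀ hC0).mp hC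
    have h2 : 1 / C₁ < 1 - 2 * μ * ↑s := by
      rw [div_lt_iff₀ hC1pos]; nlinarith
    linarith
  have hβpos : (0:ℝ) < 1 - 1 / C₁ := by nlinarith
  have hαpos : 0 < α := by rw [hα]; positivity
  have hγpos : 0 < γ := lt_of_lt_of_le (by positivity) hγ.1
  have hγlt1 : γ < 1 := hγ.2
  have hμsα : μ * s * α = 1 - 1 / C₁ := by
    rw [hα]; field_simp
  have hαγ2 : 2 ≤ α * γ := by
    have h1 : α * (2 * μ * s / (1 - 1 / C₁)) = 2 := by
      rw [hα, div_mul_div_comm, div_eq_iff (ne_of_gt (mul_pos hμspos hβpos))]; ring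
    have h2 := mul_le_mul_of_nonneg_left hγ.1 hαpos.le
    linarith
  have hα2 : 2 ≤ α := by nlinarith
  have hlam0pos : 0 < lam₀ := by
    have h := hlstar_first 0 hlstar_pos
    rw [pow_zero, one_mul] at h
    nlinarith
  -- main induction along the continuation path
  have main : ∀ ℓ, ℓ + 1 ≤ lstar →
      Function.support (xseq ℓ) ⊆ (Adag : Set (Fin p)) ∧
      ‖xseq ℓ - xdag‖ ≤ α * (γ ^ (ℓ + 1) * lam₀) := by
    intro ℓ
    induction ℓ with
    | zero =>
      intro _
      rw [hx0]
      constructor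
      · simp
      · rw [zero_sub, norm_neg]
        calc ‖xdag‖ ≤ α * γ * lam₀ := hlam₀
          _ = α * (γ ^ (0 + 1) * lam₀) := by ring
    | succ ℓ ih =>
      intro hle
      obtain ⟨ihsupp, ihnorm⟩ := ih (by omega)
      have hClam : C₁ * ε ≤ γ ^ (ℓ + 1) * lam₀ := hlstar_first (ℓ + 1) (by omega)
      set lam : ℝ := γ ^ (ℓ + 1) * lam₀ with hlamdef
      have hlampos : 0 < lam := by positivity
      have hεlam : ε ≤ (1 - (1 - 1 / C₁)) * lam := by
        have : (1 - (1 - 1 / C₁)) * lam = lam / C₁ := by field_simp; ring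
        rw [this, le_div_iff₀ hC1pos]
        linarith
      -- inner induction on the K soft-thresholding iterations
      set f : (Fin p → ℝ) → (Fin p → ℝ) := fun z => fun i =>
        softThresh lam (z i + Ψ.transpose.mulVec (y - Ψ.mulVec z) i) with hf
      have inner : ∀ k : ℕ,
          Function.support (f^[k] (xseq ℓ)) ⊆ (Adag : Set (Fin p)) ∧
          ‖f^[k] (xseq ℓ) - xdag‖ ≤ α * lam ∧
          (1 ≤ k → ‖f^[k] (xseq ℓ) - xdag‖ ≤ 2 * lam) := by
        intro k
        induction k with
        | zero =>
          refine ⟨by simpa using ihsupp, by simpa using ihnorm, by omega⟩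
        | succ k ihk =>
          obtain ⟨hks, hkn, _⟩ := ihk
          have hcond : μ * s * ‖f^[k] (xseq ℓ) - xdag‖ + ε ≤ lam := by
            have h1 : μ * s * ‖f^[k] (xseq ℓ) - xdag‖ ≤ μ * s * (α * lam) :=
              mul_le_mul_of_nonneg_left hkn hμspos.le
            have h2 : μ * s * (α * lam) = (1 - 1 / C₁) * lam := by
              rw [← mul_assoc, hμsα]
            linarith
          have hstep := istc_step Ψ μ ε s xdag η y Adag hcol hcoh hμpos.le hsuppdag hcard
            hy hη hε.le lam hlampos.le (f^[k] (xseq ℓ)) hks hcond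
          rw [Function.iterate_succ_apply']
          have hnorm2 : ‖f (f^[k] (xseq ℓ)) - xdag‖ ≤ 2 * lam := by
            have h1 : μ * s * ‖f^[k] (xseq ℓ) - xdag‖ ≤ (1 - 1 / C₁) * lam := by
              have := mul_le_mul_of_nonneg_left hkn hμspos.le
              rw [← mul_assoc, hμsα] at this
              linarith [mul_le_mul_of_nonneg_left hkn hμspos.le]
            have := hstep.2
            calc ‖f (f^[k] (xseq ℓ)) - xdag‖
                ≤ lam + (μ * s * ‖f^[k] (xseq ℓ) - xdag‖ + ε) := hstep.2
              _ ≤ lam + ((1 - 1 / C₁) * lam + (1 - (1 - 1 / C₁)) * lam) := by linarith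
              _ = 2 * lam := by ring
          refine ⟨hstep.1, ?_, fun _ => hnorm2⟩
          calc ‖f (f^[k] (xseq ℓ)) - xdag‖ ≤ 2 * lam := hnorm2
            _ ≤ α * lam := mul_le_mul_of_nonneg_right hα2 hlampos.le
      have hxeq : xseq (ℓ + 1) = f^[K] (xseq ℓ) := hxstep ℓ
      rw [hxeq]
      obtain ⟨hKs, _, hK2⟩ := inner K
      refine ⟨hKs, ?_⟩
      calc ‖f^[K] (xseq ℓ) - xdag‖ ≤ 2 * lam := hK2 hK
        _ ≤ (α * γ) * lam := mul_le_mul_of_nonneg_right hαγ2 hlampos.le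
        _ = α * (γ ^ (ℓ + 1 + 1) * lam₀) := by rw [hlamdef]; ring
  obtain ⟨h1, h2⟩ := main (lstar - 1) (by omega)
  refine ⟨h1, ?_⟩
  have hls : lstar - 1 + 1 = lstar := by omega
  rw [hls] at h2
  have h3 : α * (γ ^ lstar * lam₀) ≤ α * (C₁ * ε) :=
    mul_le_mul_of_nonneg_left hlstar.le hαpos.le
  have heq : α * (C₁ * ε) = (C₁ - 1) * ε / (μ * s) := by
    rw [hα]; field_simp
  linarith
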